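/- For γ ∈ (0,1), the quantity η(γ) := (γ² + √((1−γ²)(4−γ²)))/2 satisfies 0 < η(γ) ≤ 1, and moreover γ·η(γ) − √(1−γ²)·√(1−η(γ)²) ≥ γ/2. -/
import Mathlib


theorem stmt2 (γ : ℝ) (hγ : γ ∈ Set.Ioo (0 : ℝ) 1) :
    0 < (γ ^ 2 + Real.sqrt ((1 - γ ^ 2) * (4 - γ ^ 2))) / 2 ∧
    (γ ^ 2 + Real.sqrt ((1 - γ ^ 2) * (4 - γ ^ 2))) / 2 ≤ 1 ∧
    γ * ((γ ^ 2 + Real.sqrt ((1 - γ ^ 2) * (4 - γ ^ 2))) / 2) -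
      Real.sqrt (1 - γ ^ 2) *
        Real.sqrt (1 - ((γ ^ 2 + Real.sqrt ((1 - γ ^ 2) * (4 - γ ^ 2))) / 2) ^ 2) ≥ γ / 2 := by
  obtain ⟨h0, h1⟩ := hγ
  set s := Real.sqrt ((1 - γ ^ 2) * (4 - γ ^ 2)) with hs_def
  have hu : (0:ℝ) ≤ 1 - γ ^ 2 := by nlinarith
  have h4 : (0:ℝ) ≤ 4 - γ ^ 2 := by nlinarith
  have hs0 : 0 ≤ s := Real.sqrt_nonneg _
  have hs2 : s ^ 2 = (1 - γ ^ 2) * (4 - γ ^ 2) := Real.sq_sqrt (mul_nonneg hu h4)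
  have hsle : s ≤ 2 - γ ^ 2 := by nlinarith [hs2, hs0, sq_nonneg γ]
  have hsge : 1 - γ ^ 2 ≤ s := by nlinarith [hs2, hs0, hu]
  refine ⟨by positivity, by linarith, ?_⟩
  have key : 1 - ((γ ^ 2 + s) / 2) ^ 2 = (γ / 2) ^ 2 * (5 - 2 * γ ^ 2 - 2 * s) := by
    linear_combination (-(1:ℝ)/4) * hs2
  rw [key]
  have hsqrt1 : Real.sqrt ((γ / 2) ^ 2 * (5 - 2 * γ ^ 2 - 2 * s))
      = (γ / 2) * Real.sqrt (5 - 2 * γ ^ 2 - 2 * s) := by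
    rw [Real.sqrt_mul (sq_nonneg _), Real.sqrt_sq (by positivity)]
  rw [hsqrt1]
  have h2 : Real.sqrt (1 - γ ^ 2) * Real.sqrt (5 - 2 * γ ^ 2 - 2 * s)
      = Real.sqrt ((1 - γ ^ 2) * (5 - 2 * γ ^ 2 - 2 * s)) := (Real.sqrt_mul hu _).symm
  have h3 : (1 - γ ^ 2) * (5 - 2 * γ ^ 2 - 2 * s) = (γ ^ 2 + s - 1) ^ 2 := by
    linear_combination (-1:ℝ) * hs2
  have h5 : Real.sqrt ((1 - γ ^ 2) * (5 - 2 * γ ^ 2 - 2 * s)) = γ ^ 2 + s - 1 := by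
    rw [h3, Real.sqrt_sq (by linarith)]
  nlinarith [h2, h5, mul_comm (Real.sqrt (1 - γ ^ 2)) ((γ / 2) * Real.sqrt (5 - 2 * γ ^ 2 - 2 * s))]
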